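/- Let $k$ be a field of characteristic not dividing relevant exponents, $m \geq 1$, and let $\phi: k[t]/(t^m) \to k[t]/(t^{dm})$ be a $k$-algebra homomorphism making $k[t]/(t^{dm})$ a free module of rank $d$ over $k[t]/(t^m)$. Then $\phi(t) = t^d p(t)$ for some $p(t) \in k[t]/(t^{dm})$ with $p(0) \neq 0$ (i.e., $\phi(t)$ has $t$-adic valuation exactly $d$). -/

import Mathlib

set_option synthInstance.maxHeartbeats 1000000
set_option maxHeartbeats 1000000

open Polynomial

private lemma aux_finrank_quot {k : Type*} [Field k] (n : ℕ) :
    Module.finrank k (Polynomial k ⧸ Ideal.span {(X : Polynomial k) ^ n}) = n := by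
  have h := (AdjoinRoot.powerBasis (K := k) (f := (X : Polynomial k) ^ n)
    (pow_ne_zero n Polynomial.X_ne_zero)).finrank
  simp [AdjoinRoot.powerBasis] at h
  exact h

private lemma aux_Xpow_dvd {k : Type*} [Field k] (m : ℕ) (hm : 1 ≤ m) :
    ∀ (d : ℕ) (g : Polynomial k), (X : Polynomial k) ^ (d * m) ∣ g ^ m →
      (X : Polynomial k) ^ d ∣ g := by
  intro d
  induction d with
  | zero => intro g _; simp
  | succ n ih =>
    intro g h
    have hXg : (X : Polynomial k) ∣ g := by
      refine Polynomial.prime_X.dvd_of_dvd_pow (n := m) ?_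
      exact dvd_trans (dvd_pow_self X (by positivity)) h
    obtain ⟨g', rfl⟩ := hXg
    rw [add_mul, one_mul, pow_add, mul_pow, mul_comm ((X : Polynomial k) ^ (n * m))] at h
    have h2 : (X : Polynomial k) ^ (n * m) ∣ g' ^ m :=
      (mul_dvd_mul_iff_left (pow_ne_zero m Polynomial.X_ne_zero)).mp h
    obtain ⟨q, hq⟩ := ih g' h2
    exact ⟨q, by rw [hq]; ring⟩

/-- Abstract counting: if `B` is free over `A` (via `φ`), `A` is spanned over `k` by
`{1} ∪ s`, and `φ` maps `s` into an ideal `J`, then `dim_k B/J ≤ rank_A B`. -/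
private lemma count_le {k A B : Type*} [Field k] [CommRing A] [CommRing B]
    [Algebra k A] [Algebra k B] [Nontrivial A] [Module.Finite k B]
    (φ : A →ₐ[k] B)
    (hfree : letI := φ.toRingHom.toAlgebra; Module.Free A B)
    (s : Set A) (hs : (⊤ : Submodule k A) ≤ Submodule.span k ({1} ∪ s))
    (J : Ideal B) (hφs : ∀ a ∈ s, φ a ∈ J) :
    Module.finrank k (B ⧸ J) ≤ (letI := φ.toRingHom.toAlgebra; Module.finrank A B) := by
  classical
  letI := φ.toRingHom.toAlgebra
  haveI := hfree
  haveI : IsScalarTower k A B := IsScalarTower.of_algebraMap_eq' (S := A) φ.comp_algebraMap.symm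
  haveI : Module.Finite A B := Module.Finite.of_restrictScalars_finite k A B
  set ι := Module.Free.ChooseBasisIndex A B with hι
  set b : Module.Basis ι A B := Module.Free.chooseBasis A B with hb
  have hcard : Module.finrank A B = Fintype.card ι :=
    Module.finrank_eq_card_chooseBasisIndex A B
  set π : B →ₐ[k] B ⧸ J := Ideal.Quotient.mkₐ k J with hπ
  have hQtop : (⊤ : Submodule k (B ⧸ J)) ≤
      Submodule.span k (Set.range fun i : ι => π (b i)) := by
    intro q _
    obtain ⟨z, rfl⟩ := Ideal.Quotient.mkₐ_surjective k J q
    rw [← b.sum_repr z, map_sum]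
    refine Submodule.sum_mem _ fun i _ => ?_
    have ha : b.repr z i ∈ Submodule.span k ({1} ∪ s) := hs trivial
    refine Submodule.span_induction
      (p := fun a _ => π (a • b i) ∈ Submodule.span k (Set.range fun i : ι => π (b i)))
      ?_ ?_ ?_ ?_ ha
    · rintro a (rfl | hmem)
      · rw [one_smul]
        exact Submodule.subset_span ⟨i, rfl⟩
      · have : a • b i = φ a * b i := by rw [Algebra.smul_def]; rfl
        have hz : π (a • b i) = 0 := by
          rw [this, hπ, Ideal.Quotient.mkₐ_eq_mk, Ideal.Quotient.eq_zero_iff_mem]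
          exact J.mul_mem_right _ (hφs a hmem)
        rw [hz]; exact Submodule.zero_mem _
    · show π ((0 : A) • b i) ∈ Submodule.span k (Set.range fun i : ι => π (b i))
      rw [zero_smul, map_zero]; exact Submodule.zero_mem _
    · intro u v _ _ hu hv
      rw [add_smul, map_add]; exact Submodule.add_mem _ hu hv
    · intro c a _ hu
      rw [smul_assoc, map_smul]; exact Submodule.smul_mem _ c hu
  rw [hcard]
  refine Module.finrank_le_of_rank_le ?_
  rw [← rank_top k (B ⧸ J), ← top_le_iff.mp hQtop]
  refine le_trans (rank_span_le (R := k) _) ?_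
  calc Cardinal.mk (Set.range fun i : ι => π (b i)) ≤ Cardinal.mk ι := Cardinal.mk_range_le
    _ = Fintype.card ι := Cardinal.mk_fintype ι

set_option synthInstance.maxHeartbeats 1000000
set_option maxHeartbeats 1000000

/-- If `φ : k[t]/(t^m) → k[t]/(t^{dm})` is a `k`-algebra map making the target
a free module of rank `d` over the source, then `φ(t) = t^d p(t)` with `p(0) ≠ 0`, i.e.
`φ(t)` has `t`-adic valuation exactly `d`. -/
theorem stmt_2 (k : Type*) [Field k] (d m : ℕ) (hd : 1 ≤ d) (hm : 1 ≤ m)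
    (φ : (Polynomial k ⧸ Ideal.span {(Polynomial.X : Polynomial k) ^ m}) →ₐ[k]
      (Polynomial k ⧸ Ideal.span {(Polynomial.X : Polynomial k) ^ (d * m)}))
    (hfree : letI := φ.toRingHom.toAlgebra; Module.Free
      (Polynomial k ⧸ Ideal.span {(Polynomial.X : Polynomial k) ^ m})
      (Polynomial k ⧸ Ideal.span {(Polynomial.X : Polynomial k) ^ (d * m)}))
    (hrank : letI := φ.toRingHom.toAlgebra; Module.finrank
      (Polynomial k ⧸ Ideal.span {(Polynomial.X : Polynomial k) ^ m})
      (Polynomial k ⧸ Ideal.span {(Polynomial.X : Polynomial k) ^ (d * m)}) = d) :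
    ∃ p : Polynomial k ⧸ Ideal.span {(Polynomial.X : Polynomial k) ^ (d * m)},
      φ (Ideal.Quotient.mk _ Polynomial.X) = (Ideal.Quotient.mk _ Polynomial.X) ^ d * p ∧
      p ∉ Ideal.span {((Ideal.Quotient.mk (Ideal.span {(Polynomial.X : Polynomial k) ^ (d * m)}))
        Polynomial.X)} := by
  classical
  rcases eq_or_lt_of_le hm with hm1 | hm2
  -- Case m = 1
  · subst hm1
    haveI : Nontrivial (Polynomial k ⧸ Ideal.span {(X : Polynomial k) ^ (d * 1)}) :=
      Ideal.Quotient.nontrivial_iff.mpr (by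
        simp only [ne_eq, Ideal.span_singleton_eq_top]
        refine Polynomial.not_isUnit_of_natDegree_pos _ ?_
        simp only [natDegree_pow, natDegree_X, mul_one]
        omega)
    have hx0 : (Ideal.Quotient.mk (Ideal.span {(X : Polynomial k) ^ 1}) X) = 0 := by
      rw [Ideal.Quotient.eq_zero_iff_mem]
      exact Ideal.mem_span_singleton.mpr (by simp)
    have ht0 : (Ideal.Quotient.mk (Ideal.span {(X : Polynomial k) ^ (d * 1)}) X) ^ d = 0 := by
      rw [← map_pow, Ideal.Quotient.eq_zero_iff_mem]
      exact Ideal.mem_span_singleton.mpr (by rw [mul_one])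
    refine ⟨1, ?_, ?_⟩
    · rw [hx0, map_zero, ht0, zero_mul]
    · intro h1
      have hu : IsUnit (Ideal.Quotient.mk (Ideal.span {(X : Polynomial k) ^ (d * 1)}) X) :=
        isUnit_of_dvd_one (Ideal.mem_span_singleton.mp h1)
      exact not_isUnit_zero (ht0 ▸ hu.pow d)
  -- Case m ≥ 2
  · letI := φ.toRingHom.toAlgebra
    haveI : Nontrivial (Polynomial k ⧸ Ideal.span {(X : Polynomial k) ^ m}) :=
      Ideal.Quotient.nontrivial_iff.mpr (by
        simp only [ne_eq, Ideal.span_singleton_eq_top]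
        refine Polynomial.not_isUnit_of_natDegree_pos _ ?_
        simp only [natDegree_pow, natDegree_X, mul_one]
        omega)
    haveI : Module.Finite k (Polynomial k ⧸ Ideal.span {(X : Polynomial k) ^ (d * m)}) :=
      Module.Finite.of_basis (AdjoinRoot.powerBasis (K := k) (f := (X : Polynomial k) ^ (d * m))
        (pow_ne_zero _ Polynomial.X_ne_zero)).basis
    set t := Ideal.Quotient.mk (Ideal.span {(X : Polynomial k) ^ (d * m)}) X with htdef
    set x := Ideal.Quotient.mk (Ideal.span {(X : Polynomial k) ^ m}) X with hxdef
    set J : Ideal (Polynomial k ⧸ Ideal.span {(X : Polynomial k) ^ (d * m)}) :=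
      Ideal.span {t ^ (d + 1)} with hJ
    have hd1 : d + 1 ≤ d * m := by nlinarith
    -- dimension of the quotient by J
    have hQ : Module.finrank k
        ((Polynomial k ⧸ Ideal.span {(X : Polynomial k) ^ (d * m)}) ⧸ J) = d + 1 := by
      have hmap : J = (Ideal.span {(X : Polynomial k) ^ (d + 1)}).map
          (Ideal.Quotient.mkₐ k (Ideal.span {(X : Polynomial k) ^ (d * m)})) := by
        rw [Ideal.map_span, Set.image_singleton, map_pow]
        rfl
      have hsup : Ideal.span {(X : Polynomial k) ^ (d * m)} ⊔
          Ideal.span {(X : Polynomial k) ^ (d + 1)} =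
          Ideal.span {(X : Polynomial k) ^ (d + 1)} :=
        sup_eq_right.mpr (Ideal.span_singleton_le_span_singleton.mpr (pow_dvd_pow X hd1))
      rw [hmap]
      have e := DoubleQuot.quotQuotEquivQuotSupₐ k (Ideal.span {(X : Polynomial k) ^ (d * m)})
        (Ideal.span {(X : Polynomial k) ^ (d + 1)})
      rw [hsup] at e
      rw [e.toLinearEquiv.finrank_eq]
      exact aux_finrank_quot (d + 1)
    -- φ x is not in J
    have hnot : φ x ∉ J := by
      intro hy
      have hs : (⊤ : Submodule k (Polynomial k ⧸ Ideal.span {(X : Polynomial k) ^ m})) ≤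
          Submodule.span k ({1} ∪ Set.range fun j : ℕ => x ^ (j + 1)) := by
        set pbA := AdjoinRoot.powerBasis (K := k) (f := (X : Polynomial k) ^ m)
          (pow_ne_zero _ Polynomial.X_ne_zero) with hpbA
        rw [show (⊤ : Submodule k (Polynomial k ⧸ Ideal.span {(X : Polynomial k) ^ m})) =
          Submodule.span k (Set.range pbA.basis) from pbA.basis.span_eq.symm]
        refine Submodule.span_mono ?_
        rintro w ⟨j, rfl⟩
        rw [pbA.coe_basis]
        rcases Nat.eq_zero_or_pos (j : ℕ) with hj | hj
        · left
          show pbA.gen ^ (j : ℕ) ∈ ({1} : Set _)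
          rw [hj, pow_zero]; rfl
        · right
          refine ⟨(j : ℕ) - 1, ?_⟩
          show x ^ ((j : ℕ) - 1 + 1) = pbA.gen ^ (j : ℕ)
          rw [Nat.sub_add_cancel hj]
          rfl
      have hφs : ∀ a ∈ Set.range fun j : ℕ => x ^ (j + 1), φ a ∈ J := by
        rintro a ⟨j, rfl⟩
        rw [map_pow]
        exact J.pow_mem_of_mem hy _ (Nat.succ_pos j)
      have hle := count_le φ hfree _ hs J hφs
      rw [hrank] at hle
      omega
    -- decomposition
    obtain ⟨g, hg⟩ := Ideal.Quotient.mk_surjective (φ x)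
    have hym : (φ x) ^ m = 0 := by
      rw [← map_pow, hxdef, ← map_pow, Ideal.Quotient.eq_zero_iff_mem.mpr
        (Ideal.mem_span_singleton_self _), map_zero]
    have hdvd : (X : Polynomial k) ^ (d * m) ∣ g ^ m := by
      rw [← Ideal.mem_span_singleton, ← Ideal.Quotient.eq_zero_iff_mem, map_pow, hg]
      exact hym
    obtain ⟨q, hq⟩ := aux_Xpow_dvd m hm d g hdvd
    refine ⟨Ideal.Quotient.mk _ q, ?_, ?_⟩
    · rw [← hg, hq, map_mul, map_pow]
    · intro hmem
      obtain ⟨r, hr⟩ := Ideal.mem_span_singleton.mp hmem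
      apply hnot
      rw [← hg, hq, map_mul, map_pow, hr]
      rw [hJ]
      refine Ideal.mem_span_singleton.mpr ⟨r, ?_⟩
      ring
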